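/- Let Θ ⊆ ℝ^l, let f : Θ → ℝ be continuous, and for each h > 0 let r_h : Θ → ℝ be continuous with f_h := f + r_h, where r_h → 0 uniformly on every compact subset of Θ as h → 0. Suppose (h_n)_{n≥0} is a sequence of positive numbers decreasing to 0 such that for each n the set argmin_{θ∈Θ} f_{h_n}(θ) is nonempty, let θ_n ∈ argmin_{θ∈Θ} f_{h_n}(θ), and let θ* ∈ Θ be a limit point of the sequence (θ_n). Then θ* ∈ argmin_{θ∈Θ} f(θ), i.e. f(θ*) ≤ f(θ) for all θ ∈ Θ. -/
import Mathlib


open Filter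

theorem stmt_19 (l : ℕ) (Θ : Set (Fin l → ℝ)) (f : (Fin l → ℝ) → ℝ)
    (r : ℝ → (Fin l → ℝ) → ℝ)
    (hf : ContinuousOn f Θ)
    (hr : ∀ h : ℝ, 0 < h → ContinuousOn (r h) Θ)
    (hconv : ∀ K : Set (Fin l → ℝ), K ⊆ Θ → IsCompact K →
      TendstoUniformlyOn r (fun _ => 0) (nhdsWithin 0 (Set.Ioi 0)) K)
    (h : ℕ → ℝ) (hpos : ∀ n, 0 < h n) (hanti : Antitone h)
    (hlim : Tendsto h atTop (nhds 0))
    (θseq : ℕ → (Fin l → ℝ))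
    (hmem : ∀ n, θseq n ∈ Θ)
    (hargmin : ∀ n, ∀ θ ∈ Θ, f (θseq n) + r (h n) (θseq n) ≤ f θ + r (h n) θ)
    (θstar : Fin l → ℝ) (hθstar : θstar ∈ Θ)
    (φ : ℕ → ℕ) (hφ : StrictMono φ)
    (hlimθ : Tendsto (θseq ∘ φ) atTop (nhds θstar)) :
    ∀ θ ∈ Θ, f θstar ≤ f θ := by
  intro θ hθ
  -- the compact set
  set K : Set (Fin l → ℝ) := insert θ (insert θstar (Set.range (θseq ∘ φ))) with hK
  have hKΘ : K ⊆ Θ := by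
    intro x hx
    rcases hx with rfl | hx
    · exact hθ
    rcases hx with rfl | ⟨n, rfl⟩
    · exact hθstar
    · exact hmem (φ n)
  have hKc : IsCompact K := (hlimθ.isCompact_insert_range).insert θ
  have hU := hconv K hKΘ hKc
  -- h ∘ φ tends to 0 within Ioi 0
  have hhφ : Tendsto (fun n => h (φ n)) atTop (nhdsWithin 0 (Set.Ioi 0)) := by
    rw [tendsto_nhdsWithin_iff]
    exact ⟨hlim.comp hφ.tendsto_atTop, Eventually.of_forall fun n => hpos (φ n)⟩
  -- pointwise convergence of r (h (φ n)) x to 0 for x ∈ K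
  have hpt : ∀ x ∈ K, Tendsto (fun n => r (h (φ n)) x) atTop (nhds 0) := by
    intro x hx
    rw [Metric.tendsto_nhds]
    intro ε hε
    have := (Metric.tendstoUniformlyOn_iff.mp hU) ε hε
    filter_upwards [hhφ.eventually this] with n hn
    have := hn x hx
    rwa [dist_comm] at this
  -- convergence of f along the subsequence
  have hθseqΘ : Tendsto (θseq ∘ φ) atTop (nhdsWithin θstar Θ) := by
    rw [tendsto_nhdsWithin_iff]
    exact ⟨hlimθ, Eventually.of_forall fun n => hmem (φ n)⟩
  have hft : Tendsto (fun n => f (θseq (φ n))) atTop (nhds (f θstar)) :=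
    (hf θstar hθstar).tendsto.comp hθseqΘ
  have hmemK1 : θstar ∈ K := Set.mem_insert_of_mem _ (Set.mem_insert _ _)
  have hmemθK : θ ∈ K := Set.mem_insert _ _
  have hL : Tendsto (fun n => f (θseq (φ n)) + r (h (φ n)) (θseq (φ n))) atTop
      (nhds (f θstar)) := by
    have hrθ : Tendsto (fun n => r (h (φ n)) (θseq (φ n))) atTop (nhds 0) := by
      rw [Metric.tendsto_nhds]
      intro ε hε
      filter_upwards [hhφ.eventually ((Metric.tendstoUniformlyOn_iff.mp hU) ε hε)] with n hn
      have := hn (θseq (φ n)) (Set.mem_insert_of_mem _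
        (Set.mem_insert_of_mem _ ⟨n, rfl⟩))
      rwa [dist_comm] at this
    simpa using hft.add hrθ
  have hR : Tendsto (fun n => f θ + r (h (φ n)) θ) atTop (nhds (f θ)) := by
    simpa using (tendsto_const_nhds (x := f θ)).add (hpt θ hmemθK)
  exact le_of_tendsto_of_tendsto' hL hR fun n => hargmin (φ n) θ hθ
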